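/- Let c = (c_i), x = (x_i), and y = (y_i) be in ℂ^{l+1}. Define f(x,c) = Σ_{j=0}^{l} x_j ∏_{ν=0}^{j-1}(z-c_ν) and g(y,c) = Σ_{j=0}^{l} y_j / ∏_{ν=0}^{j}(z-c_ν). Then the sum of residues Σ_c res_{z=c}(f(x,c)·g(y,c)) over all poles equals Σ_{j=0}^{l} x_j y_j; in particular it is independent of c ∈ ℂ^{l+1}. -/

import Mathlib

/-- Residue of a rational function at `c ∈ ℂ` (coefficient of `1/(z-c)` in the
Laurent expansion at `c`). -/
noncomputable def resAt (c : ℂ) (f : RatFunc ℂ) : ℂ :=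
  ((RatFunc.laurent c f : RatFunc ℂ) : LaurentSeries ℂ).coeff (-1)

open Polynomial RatFunc HahnSeries

lemma resAt_sum {ι : Type*} (a : ℂ) (s : Finset ι) (f : ι → RatFunc ℂ) :
    resAt a (∑ i ∈ s, f i) = ∑ i ∈ s, resAt a (f i) := by
  unfold resAt
  rw [map_sum, map_sum]
  exact map_sum (HahnSeries.coeff.addMonoidHom (-1 : ℤ)) _ s

lemma resAt_C_mul (a r : ℂ) (f : RatFunc ℂ) :
    resAt a (RatFunc.C r * f) = r * resAt a f := by
  unfold resAt
  rw [map_mul, RatFunc.laurent_C, map_mul, ← RatFunc.algebraMap_C, ← IsScalarTower.algebraMap_apply]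
  simp

lemma coeff_neg_of_range (x : LaurentSeries ℂ)
    (h : x ∈ Set.range (HahnSeries.ofPowerSeries ℤ ℂ)) :
    x.coeff (-1) = 0 := by
  obtain ⟨p, hp⟩ := h
  rw [← hp]
  rw [show ((HahnSeries.ofPowerSeries ℤ ℂ) p) = ((p : LaurentSeries ℂ)) from rfl,
    PowerSeries.coeff_coe]
  simp

lemma coe_poly (p : ℂ[X]) :
    ((algebraMap ℂ[X] (RatFunc ℂ) p : RatFunc ℂ) : LaurentSeries ℂ)
      = HahnSeries.ofPowerSeries ℤ ℂ (p : PowerSeries ℂ) := by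
  rw [show (algebraMap ℂ[X] (RatFunc ℂ) p) = (p : RatFunc ℂ) from rfl, ← RatFunc.coe_coe]

/-- analytic vanishing : if `q` does not vanish at `a`, then `resAt a (p/q) = 0`. -/
lemma resAt_eq_zero (a : ℂ) (p q : ℂ[X]) (hq : q.eval a ≠ 0) :
    resAt a (algebraMap ℂ[X] (RatFunc ℂ) p / algebraMap ℂ[X] (RatFunc ℂ) q) = 0 := by
  unfold resAt
  rw [RatFunc.laurent_div]
  apply coeff_neg_of_range
  rw [map_div₀, coe_poly, coe_poly]
  set P : PowerSeries ℂ := ((Polynomial.taylor a p : ℂ[X]) : PowerSeries ℂ)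
  set Q : PowerSeries ℂ := ((Polynomial.taylor a q : ℂ[X]) : PowerSeries ℂ)
  have hQu : IsUnit Q := by
    rw [PowerSeries.isUnit_iff_constantCoeff]
    have : PowerSeries.constantCoeff Q = (Polynomial.taylor a q).coeff 0 := by
      simp [Q, PowerSeries.coeff_coe]
    rw [this, Polynomial.taylor_coeff_zero]
    exact hq.isUnit
  obtain ⟨u, hu⟩ := hQu
  refine ⟨P * ↑u⁻¹, ?_⟩
  rw [map_mul]
  rw [div_eq_mul_inv]
  congr 1
  rw [← hu]
  have h1 : (HahnSeries.ofPowerSeries ℤ ℂ ((u⁻¹ : Units (PowerSeries ℂ)) : PowerSeries ℂ))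
      * (HahnSeries.ofPowerSeries ℤ ℂ ((u : PowerSeries ℂ))) = 1 := by
    rw [← map_mul]; simp
  exact eq_inv_of_mul_eq_one_left h1

lemma resAt_inv_poly (a : ℂ) (q : ℂ[X]) (hq : q.eval a ≠ 0) :
    resAt a ((algebraMap ℂ[X] (RatFunc ℂ) q)⁻¹) = 0 := by
  have := resAt_eq_zero a 1 q hq
  rwa [map_one, one_div] at this

lemma single_int_inv (k : ℤ) : (HahnSeries.single k (1:ℂ) : LaurentSeries ℂ)⁻¹
    = HahnSeries.single (-k) (1:ℂ) := by
  symm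
  apply eq_inv_of_mul_eq_one_left
  rw [HahnSeries.single_mul_single, neg_add_cancel, one_mul, HahnSeries.single_zero_one]

lemma resAt_self_pow (a : ℂ) (k : ℕ) (hk : 1 ≤ k) :
    resAt a (((RatFunc.X - RatFunc.C a) ^ k)⁻¹) = if k = 1 then 1 else 0 := by
  unfold resAt
  rw [map_inv₀, map_pow, map_sub, RatFunc.laurent_X, RatFunc.laurent_C]
  rw [add_sub_cancel_right]
  have hc : ((((RatFunc.X : RatFunc ℂ) ^ k)⁻¹ : RatFunc ℂ) : LaurentSeries ℂ)
      = HahnSeries.single (-(k:ℤ)) (1:ℂ) := by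
    rw [show (((RatFunc.X : RatFunc ℂ) ^ k)⁻¹ : RatFunc ℂ) = 1 / (RatFunc.X ^ k) by rw [one_div],
      map_div₀, map_one, map_pow, RatFunc.coe_X, one_div,
      HahnSeries.single_pow, one_pow, nsmul_eq_mul, mul_one, single_int_inv]
  rw [hc]
  rcases eq_or_ne k 1 with h | h
  · subst h; simp [HahnSeries.coeff_single_same]
  · rw [if_neg h, HahnSeries.coeff_single_of_ne]
    omega

lemma resAt_sub (a : ℂ) (f g : RatFunc ℂ) :
    resAt a (f - g) = resAt a f - resAt a g := by
  unfold resAt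
  rw [map_sub, map_sub]
  exact HahnSeries.coeff_sub

noncomputable def mpoly (m : Multiset ℂ) : ℂ[X] :=
  (m.map (fun ρ => Polynomial.X - Polynomial.C ρ)).prod

noncomputable def mprod (m : Multiset ℂ) : RatFunc ℂ :=
  (m.map (fun ρ => RatFunc.X - RatFunc.C ρ)).prod

lemma ratX_sub_C (b : ℂ) : RatFunc.X - RatFunc.C b
    = algebraMap ℂ[X] (RatFunc ℂ) (Polynomial.X - Polynomial.C b) := by
  rw [map_sub, RatFunc.algebraMap_X, RatFunc.algebraMap_C]

lemma mprod_eq (m : Multiset ℂ) : mprod m = algebraMap ℂ[X] (RatFunc ℂ) (mpoly m) := by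
  unfold mprod mpoly
  rw [map_multiset_prod, Multiset.map_map]
  congr 1
  apply Multiset.map_congr rfl
  intro ρ _
  exact ratX_sub_C ρ

lemma mpoly_eval_ne_zero {a : ℂ} {m : Multiset ℂ} (h : a ∉ m) : (mpoly m).eval a ≠ 0 := by
  unfold mpoly
  rw [Polynomial.eval_multiset_prod]
  apply Multiset.prod_ne_zero
  intro h0
  rw [Multiset.mem_map] at h0
  obtain ⟨f, hf, hf2⟩ := h0
  rw [Multiset.mem_map] at hf
  obtain ⟨ρ, hρ, rfl⟩ := hf
  rw [Polynomial.eval_sub, Polynomial.eval_X, Polynomial.eval_C, sub_eq_zero] at hf2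
  exact h (hf2 ▸ hρ)

lemma resAt_mprod_notmem (a : ℂ) (m : Multiset ℂ) (h : a ∉ m) :
    resAt a (mprod m)⁻¹ = 0 := by
  rw [mprod_eq]
  exact resAt_inv_poly a _ (mpoly_eval_ne_zero h)

lemma X_sub_C_ne_zero' (b : ℂ) : (RatFunc.X - RatFunc.C b : RatFunc ℂ) ≠ 0 := by
  rw [ratX_sub_C]
  exact RatFunc.algebraMap_ne_zero (Polynomial.X_sub_C_ne_zero b)

lemma mprod_ne_zero (m : Multiset ℂ) : mprod m ≠ 0 := by
  unfold mprod
  apply Multiset.prod_ne_zero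
  intro h0
  rw [Multiset.mem_map] at h0
  obtain ⟨ρ, hρ, h⟩ := h0
  exact X_sub_C_ne_zero' ρ h

lemma mprod_cons (a : ℂ) (m : Multiset ℂ) :
    mprod (a ::ₘ m) = (RatFunc.X - RatFunc.C a) * mprod m := by
  unfold mprod
  rw [Multiset.map_cons, Multiset.prod_cons]

lemma mprod_split (a b : ℂ) (t : Multiset ℂ) (hab : a ≠ b) :
    (mprod (a ::ₘ b ::ₘ t))⁻¹
      = RatFunc.C ((a - b)⁻¹) * ((mprod (a ::ₘ t))⁻¹ - (mprod (b ::ₘ t))⁻¹) := by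
  rw [mprod_cons, mprod_cons, mprod_cons, map_inv₀]
  have hA := X_sub_C_ne_zero' a
  have hB := X_sub_C_ne_zero' b
  have hU := mprod_ne_zero t
  have hab0 : a - b ≠ 0 := sub_ne_zero.mpr hab
  set A := RatFunc.X - RatFunc.C a with hAdef
  set B := RatFunc.X - RatFunc.C b with hBdef
  have key : B - A = RatFunc.C (a - b) := by
    rw [hAdef, hBdef, map_sub]; ring
  have hab' : RatFunc.C (a - b) ≠ 0 := by
    intro h
    rw [← RatFunc.algebraMap_C (a-b)] at h
    have h2 := RatFunc.algebraMap_injective ℂ (h.trans (map_zero _).symm)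
    rw [Polynomial.C_eq_zero] at h2
    exact hab0 h2
  have h1 : (A * mprod t)⁻¹ - (B * mprod t)⁻¹
      = RatFunc.C (a - b) * (A * (B * mprod t))⁻¹ := by
    simp only [mul_inv]
    rw [← sub_mul, inv_sub_inv hA hB, ← key, div_eq_mul_inv]
    simp only [mul_inv]
    ring
  rw [h1, inv_mul_cancel_left₀ hab']

lemma sum_resAt_mprod : ∀ (n : ℕ) (m : Multiset ℂ) (T : Finset ℂ), Multiset.card m = n + 1 →
    (∀ ρ ∈ m, ρ ∈ T) → ∑ a ∈ T, resAt a (mprod m)⁻¹ = if n = 0 then 1 else 0 := by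
  intro n
  induction n with
  | zero =>
    intro m T hcard hT
    obtain ⟨ρ, rfl⟩ := Multiset.card_eq_one.mp hcard
    rw [if_pos rfl]
    rw [Finset.sum_eq_single_of_mem ρ (hT ρ (Multiset.mem_singleton_self ρ))]
    · have h1 : mprod {ρ} = (RatFunc.X - RatFunc.C ρ) ^ 1 := by
        simp [mprod, pow_one]
      rw [h1, resAt_self_pow ρ 1 le_rfl]; simp
    · intro b _ hb
      exact resAt_mprod_notmem b _ (by simpa using hb)
  | succ n ih =>
    intro m T hcard hT
    rw [if_neg (Nat.succ_ne_zero n)]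
    have hm0 : m ≠ 0 := by
      intro h; rw [h] at hcard; simp at hcard
    obtain ⟨a, ha⟩ := Multiset.exists_mem_of_ne_zero hm0
    by_cases hex : ∃ b ∈ m, b ≠ a
    · obtain ⟨b, hbm, hba⟩ := hex
      have hbe : b ∈ m.erase a := (Multiset.mem_erase_of_ne hba).mpr hbm
      set t : Multiset ℂ := (m.erase a).erase b with ht
      have hm : m = a ::ₘ b ::ₘ t := by
        rw [ht, Multiset.cons_erase hbe, Multiset.cons_erase ha]
      have htm : ∀ ρ ∈ t, ρ ∈ m := by
        intro ρ hρ
        exact Multiset.mem_of_le (Multiset.erase_le _ _)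
          (Multiset.mem_of_le (Multiset.erase_le _ _) hρ)
      have hct : Multiset.card t = n := by
        have := hcard
        rw [hm] at this
        simpa using this
      have hsub1 : ∀ ρ ∈ (a ::ₘ t), ρ ∈ T := by
        intro ρ hρ
        rcases Multiset.mem_cons.mp hρ with h | h
        · exact hT _ (h ▸ ha)
        · exact hT _ (htm _ h)
      have hsub2 : ∀ ρ ∈ (b ::ₘ t), ρ ∈ T := by
        intro ρ hρ
        rcases Multiset.mem_cons.mp hρ with h | h
        · exact hT _ (h ▸ hbm)
        · exact hT _ (htm _ h)
      have step : ∑ x ∈ T, resAt x (mprod m)⁻¹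
          = ∑ x ∈ T, (a - b)⁻¹ *
            (resAt x (mprod (a ::ₘ t))⁻¹ - resAt x (mprod (b ::ₘ t))⁻¹) := by
        apply Finset.sum_congr rfl
        intro x _
        rw [hm, mprod_split a b t (Ne.symm hba), resAt_C_mul, resAt_sub]
      rw [step, ← Finset.mul_sum, Finset.sum_sub_distrib,
        ih (a ::ₘ t) T (by simp [hct]) hsub1, ih (b ::ₘ t) T (by simp [hct]) hsub2,
        sub_self, mul_zero]
    · push_neg at hex
      have hm : m = Multiset.replicate (n + 2) a := by
        rw [Multiset.eq_replicate]
        exact ⟨hcard, hex⟩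
      have hp : mprod m = (RatFunc.X - RatFunc.C a) ^ (n + 2) := by
        rw [hm]; unfold mprod
        rw [Multiset.map_replicate, Multiset.prod_replicate]
      apply Finset.sum_eq_zero
      intro x _
      rcases eq_or_ne x a with rfl | hxa
      · rw [hp, resAt_self_pow x (n+2) (by omega)]
        simp
      · apply resAt_mprod_notmem
        rw [hm, Multiset.mem_replicate]
        rintro ⟨-, rfl⟩
        exact hxa rfl

lemma mprod_finset {k : ℕ} (c : Fin k → ℂ) (s : Finset (Fin k)) :
    mprod (s.val.map c) = ∏ ν ∈ s, (RatFunc.X - RatFunc.C (c ν)) := by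
  unfold mprod
  rw [Multiset.map_map]
  rfl

lemma prodX_ne_zero {k : ℕ} (c : Fin k → ℂ) (s : Finset (Fin k)) :
    ∏ ν ∈ s, (RatFunc.X - RatFunc.C (c ν)) ≠ 0 :=
  Finset.prod_ne_zero_iff.mpr (fun ν _ => X_sub_C_ne_zero' (c ν))

lemma key_sum (l : ℕ) (c : Fin (l+1) → ℂ) (i j : Fin (l+1)) :
    ∑ a ∈ Finset.image c Finset.univ,
      resAt a ((∏ ν ∈ Finset.Iio i, (RatFunc.X - RatFunc.C (c ν))) /
               (∏ ν ∈ Finset.Iic j, (RatFunc.X - RatFunc.C (c ν))))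
      = if i = j then 1 else 0 := by
  by_cases hij : i ≤ j
  · have hsub : Finset.Iio i ⊆ Finset.Iic j := by
      intro ν hν
      rw [Finset.mem_Iio] at hν
      rw [Finset.mem_Iic]
      exact le_of_lt (lt_of_lt_of_le hν hij)
    have hsd : Finset.Iic j \ Finset.Iio i = Finset.Icc i j := by
      ext ν
      simp only [Finset.mem_sdiff, Finset.mem_Iic, Finset.mem_Iio, Finset.mem_Icc, not_lt]
      tauto
    have hP := prodX_ne_zero c (Finset.Iio i)
    have hquot : (∏ ν ∈ Finset.Iio i, (RatFunc.X - RatFunc.C (c ν))) /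
        (∏ ν ∈ Finset.Iic j, (RatFunc.X - RatFunc.C (c ν)))
        = (mprod ((Finset.Icc i j).val.map c))⁻¹ := by
      rw [mprod_finset, ← hsd, ← Finset.prod_sdiff hsub, div_mul_eq_div_div_swap, div_self hP,
        one_div]
    rw [hquot, sum_resAt_mprod ((j : ℕ) - (i : ℕ)) _ _ ?hcard ?hmem]
    · have : (j : ℕ) - (i : ℕ) = 0 ↔ i = j := by
        rw [Fin.le_def] at hij
        constructor
        · intro h; exact Fin.ext (by omega)
        · intro h; rw [h]; omega
      by_cases h : i = j
      · rw [if_pos h, if_pos (this.mpr h)]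
      · rw [if_neg h, if_neg (fun hh => h (this.mp hh))]
    case hcard =>
      rw [Multiset.card_map]
      have : (Finset.Icc i j).card = (j : ℕ) + 1 - (i : ℕ) := Fin.card_Icc i j
      rw [Fin.le_def] at hij
      simpa [this] using by omega
    case hmem =>
      intro ρ hρ
      rw [Multiset.mem_map] at hρ
      obtain ⟨ν, _, rfl⟩ := hρ
      exact Finset.mem_image_of_mem c (Finset.mem_univ ν)
  · push_neg at hij
    have hsub : Finset.Iic j ⊆ Finset.Iio i := by
      intro ν hν
      rw [Finset.mem_Iic] at hν
      rw [Finset.mem_Iio]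
      exact lt_of_le_of_lt hν hij
    have hQ := prodX_ne_zero c (Finset.Iic j)
    have hquot : (∏ ν ∈ Finset.Iio i, (RatFunc.X - RatFunc.C (c ν))) /
        (∏ ν ∈ Finset.Iic j, (RatFunc.X - RatFunc.C (c ν)))
        = algebraMap ℂ[X] (RatFunc ℂ)
            (∏ ν ∈ Finset.Iio i \ Finset.Iic j, (Polynomial.X - Polynomial.C (c ν))) := by
      rw [← Finset.prod_sdiff hsub, mul_div_assoc, div_self hQ, mul_one, map_prod]
      exact Finset.prod_congr rfl (fun ν _ => ratX_sub_C (c ν))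
    rw [hquot, if_neg (fun h => absurd (h ▸ hij) (lt_irrefl _))]
    apply Finset.sum_eq_zero
    intro a _
    have := resAt_eq_zero a
      (∏ ν ∈ Finset.Iio i \ Finset.Iic j, (Polynomial.X - Polynomial.C (c ν))) 1 (by simp)
    rwa [map_one, div_one] at this

/-- Corollary `cor:nondeg`.
For `c, x, y ∈ ℂ^{l+1}`, with
`f(x,c) = Σ_j x_j ∏_{ν=0}^{j-1}(z-c_ν)` and `g(y,c) = Σ_j y_j / ∏_{ν=0}^{j}(z-c_ν)`,
the sum of residues of `f(x,c)·g(y,c)` over all poles equals `Σ_j x_j y_j`;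
in particular it is independent of `c`. -/
theorem residue_pairing_constant (l : ℕ) (c x y : Fin (l + 1) → ℂ) :
    ∑ a ∈ Finset.image c Finset.univ,
      resAt a
        ((∑ j : Fin (l + 1),
            RatFunc.C (x j) * ∏ ν ∈ Finset.Iio j, (RatFunc.X - RatFunc.C (c ν)))
          * (∑ j : Fin (l + 1),
            RatFunc.C (y j) / ∏ ν ∈ Finset.Iic j, (RatFunc.X - RatFunc.C (c ν))))
      = ∑ j : Fin (l + 1), x j * y j := by
  have hFG : (∑ j : Fin (l + 1),
        RatFunc.C (x j) * ∏ ν ∈ Finset.Iio j, (RatFunc.X - RatFunc.C (c ν)))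
      * (∑ j : Fin (l + 1),
        RatFunc.C (y j) / ∏ ν ∈ Finset.Iic j, (RatFunc.X - RatFunc.C (c ν)))
      = ∑ i : Fin (l + 1), ∑ j : Fin (l + 1),
          RatFunc.C (x i * y j) *
            ((∏ ν ∈ Finset.Iio i, (RatFunc.X - RatFunc.C (c ν))) /
             (∏ ν ∈ Finset.Iic j, (RatFunc.X - RatFunc.C (c ν)))) := by
    rw [Finset.sum_mul_sum]
    refine Finset.sum_congr rfl fun i _ => Finset.sum_congr rfl fun j _ => ?_
    rw [map_mul]
    ring
  calc
    ∑ a ∈ Finset.image c Finset.univ,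
      resAt a
        ((∑ j : Fin (l + 1),
            RatFunc.C (x j) * ∏ ν ∈ Finset.Iio j, (RatFunc.X - RatFunc.C (c ν)))
          * (∑ j : Fin (l + 1),
            RatFunc.C (y j) / ∏ ν ∈ Finset.Iic j, (RatFunc.X - RatFunc.C (c ν))))
        = ∑ a ∈ Finset.image c Finset.univ, ∑ i : Fin (l + 1), ∑ j : Fin (l + 1),
            x i * y j * resAt a
              ((∏ ν ∈ Finset.Iio i, (RatFunc.X - RatFunc.C (c ν))) /
               (∏ ν ∈ Finset.Iic j, (RatFunc.X - RatFunc.C (c ν)))) := by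
          rw [hFG]
          simp only [resAt_sum, resAt_C_mul]
    _ = ∑ i : Fin (l + 1), ∑ j : Fin (l + 1), ∑ a ∈ Finset.image c Finset.univ,
            x i * y j * resAt a
              ((∏ ν ∈ Finset.Iio i, (RatFunc.X - RatFunc.C (c ν))) /
               (∏ ν ∈ Finset.Iic j, (RatFunc.X - RatFunc.C (c ν)))) := by
          rw [Finset.sum_comm]
          exact Finset.sum_congr rfl fun i _ => Finset.sum_comm
    _ = ∑ i : Fin (l + 1), ∑ j : Fin (l + 1), x i * y j * (if i = j then 1 else 0) := by
          refine Finset.sum_congr rfl fun i _ => Finset.sum_congr rfl fun j _ => ?_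
          rw [← Finset.mul_sum, key_sum l c i j]
    _ = ∑ j : Fin (l + 1), x j * y j := by
          simp
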